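/- arXiv:2103.10058 — 4 statements merged into one kernel-verified Lean document; each statement's English description precedes it below -/
import Mathlib

section
/- Let Ṡ = ∏_{j=1}^m X_j − p_1(1 + ∑_{j=1}^m μ_j^{-1}Ẋ_j) and Z = ∑_{j=1}^m ∏_{k≠j} X_k − p_1 s_1. Then E[Ṡ Z] = p_1 ∑_{j=1}^m ∏_{k≠j}(1+μ_k) − p_1²(s_1 + s_1² − s_2). -/
open MeasureTheory ProbabilityTheory Finset
open scoped NNReal ENNReal

namespace SdotZ

/-! ### One-dimensional Poisson moments -/

lemma succ_mul_pmf (r : ℝ≥0) (n : ℕ) :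
    ((n : ℝ) + 1) * poissonPMFReal r (n + 1) = r * poissonPMFReal r n := by
  unfold poissonPMFReal
  rw [Nat.factorial_succ, pow_succ]
  push_cast
  have h1 : ((n : ℝ) + 1) ≠ 0 := by positivity
  field_simp

lemma hasSum_id (r : ℝ≥0) : HasSum (fun n : ℕ => (n : ℝ) * poissonPMFReal r n) r := by
  have h0 : HasSum (fun n : ℕ => r * poissonPMFReal r n) r := by
    simpa [poissonPMFReal] using (poissonPMFRealSum r).mul_left (r : ℝ)
  have h1 : HasSum (fun n : ℕ => ((n + 1 : ℕ) : ℝ) * poissonPMFReal r (n + 1)) r := by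
    refine h0.congr_fun fun n => ?_
    push_cast
    rw [succ_mul_pmf]
  have := (hasSum_nat_add_iff (f := fun n : ℕ => (n : ℝ) * poissonPMFReal r n) 1).mp h1
  simpa using this

lemma hasSum_fac2 (r : ℝ≥0) :
    HasSum (fun n : ℕ => (n : ℝ) * ((n : ℝ) - 1) * poissonPMFReal r n) ((r : ℝ) ^ 2) := by
  have h0 : HasSum (fun n : ℕ => (r : ℝ) ^ 2 * poissonPMFReal r n) ((r : ℝ) ^ 2) := by
    simpa [poissonPMFReal] using (poissonPMFRealSum r).mul_left ((r : ℝ) ^ 2)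
  have h1 : HasSum (fun n : ℕ =>
      ((n + 2 : ℕ) : ℝ) * (((n + 2 : ℕ) : ℝ) - 1) * poissonPMFReal r (n + 2)) ((r : ℝ) ^ 2) := by
    refine h0.congr_fun fun n => ?_
    unfold poissonPMFReal
    rw [show n + 2 = (n + 1) + 1 from rfl, Nat.factorial_succ, Nat.factorial_succ]
    push_cast
    have h1 : ((n : ℝ) + 1) ≠ 0 := by positivity
    have h2 : ((n : ℝ) + 1 + 1) ≠ 0 := by positivity
    field_simp
    ring
  have := (hasSum_nat_add_iff
    (f := fun n : ℕ => (n : ℝ) * ((n : ℝ) - 1) * poissonPMFReal r n) 2).mp h1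
  simpa [Finset.sum_range_succ] using this

lemma hasSum_sq (r : ℝ≥0) : HasSum (fun n : ℕ => (n : ℝ) ^ 2 * poissonPMFReal r n)
    ((r : ℝ) + (r : ℝ) ^ 2) := by
  have := (hasSum_id r).add (hasSum_fac2 r)
  refine this.congr_fun fun n => ?_
  ring

lemma poisson_integrable {r : ℝ≥0} {f : ℕ → ℝ} (hf : ∀ n, 0 ≤ f n) {S : ℝ}
    (h : HasSum (fun n => f n * poissonPMFReal r n) S) :
    Integrable f (poissonMeasure r) := by
  refine ⟨Measurable.aestronglyMeasurable (by exact measurable_from_top), ?_⟩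
  rw [HasFiniteIntegral, lintegral_countable']
  have key : ∀ n : ℕ, ‖f n‖ₑ * poissonMeasure r {n}
      = ENNReal.ofReal (f n * poissonPMFReal r n) := by
    intro n
    have h1 : poissonMeasure r {n} = ENNReal.ofReal (poissonPMFReal r n) := by
      rw [poissonMeasure_singleton]
      rfl
    rw [h1, ENNReal.ofReal_mul (hf n)]
    congr 1
    rw [← ofReal_norm, Real.norm_of_nonneg (hf n)]
  simp_rw [key]
  rw [← ENNReal.ofReal_tsum_of_nonneg (fun n => mul_nonneg (hf n) poissonPMFReal_nonneg)
    h.summable]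
  exact ENNReal.ofReal_lt_top

lemma poisson_integral {r : ℝ≥0} {f : ℕ → ℝ} (hf : ∀ n, 0 ≤ f n) {S : ℝ}
    (h : HasSum (fun n => f n * poissonPMFReal r n) S) :
    ∫ n, f n ∂poissonMeasure r = S := by
  have hint : Integrable f (poissonMeasure r) := poisson_integrable hf h
  rw [integral_poissonMeasure' hint]
  rw [← h.tsum_eq]
  congr 1 with n
  rw [smul_eq_mul, mul_comm]
  rfl

variable {r : ℝ≥0}

lemma integrable_coe : Integrable (fun n : ℕ => (n : ℝ)) (poissonMeasure r) :=
  poisson_integrable (fun n => by positivity) (hasSum_id r)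

lemma integral_coe : ∫ n : ℕ, (n : ℝ) ∂poissonMeasure r = r :=
  poisson_integral (fun n => by positivity) (hasSum_id r)

lemma integrable_sq : Integrable (fun n : ℕ => (n : ℝ) ^ 2) (poissonMeasure r) :=
  poisson_integrable (fun n => by positivity) (hasSum_sq r)

lemma integral_sq : ∫ n : ℕ, (n : ℝ) ^ 2 ∂poissonMeasure r = (r : ℝ) + (r : ℝ) ^ 2 :=
  poisson_integral (fun n => by positivity) (hasSum_sq r)

lemma integrable_sub_const (c : ℝ) :
    Integrable (fun n : ℕ => (n : ℝ) - c) (poissonMeasure r) :=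
  integrable_coe.sub (integrable_const c)

lemma integral_sub_const : ∫ n : ℕ, ((n : ℝ) - (r : ℝ)) ∂poissonMeasure r = 0 := by
  rw [integral_sub integrable_coe (integrable_const _), integral_coe, integral_const]
  simp

lemma integrable_sub_mul (c : ℝ) :
    Integrable (fun n : ℕ => ((n : ℝ) - c) * (n : ℝ)) (poissonMeasure r) := by
  have : (fun n : ℕ => ((n : ℝ) - c) * (n : ℝ))
      = fun n : ℕ => (n : ℝ) ^ 2 - c * (n : ℝ) := by ext n; ring
  rw [this]
  exact integrable_sq.sub (integrable_coe.const_mul c)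

lemma integral_sub_mul :
    ∫ n : ℕ, (((n : ℝ) - (r : ℝ)) * (n : ℝ)) ∂poissonMeasure r = r := by
  have : (fun n : ℕ => ((n : ℝ) - (r : ℝ)) * (n : ℝ))
      = fun n : ℕ => (n : ℝ) ^ 2 - (r : ℝ) * (n : ℝ) := by ext n; ring
  rw [this, integral_sub integrable_sq (integrable_coe.const_mul _), integral_sq,
    integral_const_mul, integral_coe]
  ring

/-! ### Fubini for `Measure.pi` with varying measures on `ℕ` -/

lemma integral_pi_prod {m : ℕ} (ν : Fin m → Measure ℕ) [h : ∀ i, IsProbabilityMeasure (ν i)]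
    (f : Fin m → ℕ → ℝ) :
    ∫ x : Fin m → ℕ, ∏ i, f i (x i) ∂Measure.pi ν = ∏ i, ∫ n, f i n ∂ν i := by
  have := MeasureTheory.integral_fintype_prod_eq_prod (𝕜 := ℝ) (μ := ν) f
  exact this

lemma integrable_pi_prod {m : ℕ} (ν : Fin m → Measure ℕ) [h : ∀ i, IsProbabilityMeasure (ν i)]
    (f : Fin m → ℕ → ℝ) (hf : ∀ i, Integrable (f i) (ν i)) :
    Integrable (fun x : Fin m → ℕ => ∏ i, f i (x i)) (Measure.pi ν) := by
  have := MeasureTheory.Integrable.fintype_prod_dep (𝕜 := ℝ) (μ := ν) hf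
  exact this

/-! ### product-splitting helpers -/

lemma prod_ite_split {m : ℕ} (l : Fin m) (A g : Fin m → ℝ) :
    ∏ k, (if k = l then A k else g k) = A l * ∏ k ∈ Finset.univ.erase l, g k := by
  rw [← Finset.mul_prod_erase Finset.univ _ (Finset.mem_univ l), if_pos rfl]
  congr 1
  exact Finset.prod_congr rfl fun k hk => if_neg (Finset.mem_erase.mp hk).1

lemma prod_ite_single {m : ℕ} (j : Fin m) (A : Fin m → ℝ) :
    ∏ k, (if k = j then A k else 1) = A j := by
  rw [prod_ite_split]; simp


/-! ### The pure-product coordinate functions -/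

noncomputable def F1 {m : ℕ} (l k : Fin m) (n : ℕ) : ℝ := if k = l then (n : ℝ) else (n : ℝ) ^ 2

noncomputable def F2 {m : ℕ} (l k : Fin m) (n : ℕ) : ℝ := if k = l then 1 else (n : ℝ)

noncomputable def F3 {m : ℕ} (μ : Fin m → ℝ≥0) (l j k : Fin m) (n : ℕ) : ℝ :=
  (if k = j then ((n : ℝ) - (μ j : ℝ)) else 1) * (if k = l then 1 else (n : ℝ))

noncomputable def F5 {m : ℕ} (μ : Fin m → ℝ≥0) (j k : Fin m) (n : ℕ) : ℝ :=
  if k = j then ((n : ℝ) - (μ j : ℝ)) else 1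

variable {m : ℕ} (μ : Fin m → ℝ≥0)

lemma F1_eq_of_eq (l : Fin m) : F1 l l = fun n : ℕ => (n : ℝ) := by
  funext n; simp [F1]

lemma F1_eq_of_ne {l k : Fin m} (h : k ≠ l) : F1 l k = fun n : ℕ => (n : ℝ) ^ 2 := by
  funext n; simp [F1, h]

lemma F1_integrable (l k : Fin m) : Integrable (F1 l k) (poissonMeasure (μ k)) := by
  by_cases h : k = l
  · subst h; rw [F1_eq_of_eq]; exact integrable_coe
  · rw [F1_eq_of_ne h]; exact integrable_sq

lemma F1_integral (l k : Fin m) :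
    ∫ n, F1 l k n ∂poissonMeasure (μ k)
      = if k = l then (μ k : ℝ) else (μ k : ℝ) * (1 + (μ k : ℝ)) := by
  by_cases h : k = l
  · subst h; rw [F1_eq_of_eq, if_pos rfl]; exact integral_coe
  · rw [F1_eq_of_ne h, if_neg h, integral_sq]; ring

lemma F2_eq_of_eq (l : Fin m) : F2 l l = fun _ : ℕ => (1 : ℝ) := by
  funext n; simp [F2]

lemma F2_eq_of_ne {l k : Fin m} (h : k ≠ l) : F2 l k = fun n : ℕ => (n : ℝ) := by
  funext n; simp [F2, h]

lemma F2_integrable (l k : Fin m) : Integrable (F2 l k) (poissonMeasure (μ k)) := by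
  by_cases h : k = l
  · subst h; rw [F2_eq_of_eq]; exact integrable_const 1
  · rw [F2_eq_of_ne h]; exact integrable_coe

lemma F2_integral (l k : Fin m) :
    ∫ n, F2 l k n ∂poissonMeasure (μ k) = if k = l then 1 else (μ k : ℝ) := by
  by_cases h : k = l
  · subst h; rw [F2_eq_of_eq, if_pos rfl]; simp
  · rw [F2_eq_of_ne h, if_neg h]; exact integral_coe

lemma F3_eq_eq_eq {l j k : Fin m} (h1 : k = j) (h2 : k = l) :
    F3 μ l j k = fun n : ℕ => (n : ℝ) - (μ j : ℝ) := by
  subst h1; subst h2; funext n; simp [F3]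

lemma F3_eq_eq_ne {l j k : Fin m} (h1 : k = j) (h2 : k ≠ l) :
    F3 μ l j k = fun n : ℕ => ((n : ℝ) - (μ j : ℝ)) * (n : ℝ) := by
  subst h1; funext n; simp [F3, h2]

lemma F3_eq_ne_eq {l j k : Fin m} (h1 : k ≠ j) (h2 : k = l) :
    F3 μ l j k = fun _ : ℕ => (1 : ℝ) := by
  subst h2; funext n; simp [F3, fun h => h1 h]

lemma F3_eq_ne_ne {l j k : Fin m} (h1 : k ≠ j) (h2 : k ≠ l) :
    F3 μ l j k = fun n : ℕ => (n : ℝ) := by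
  funext n; simp [F3, h1, h2]

lemma F3_integrable (l j k : Fin m) : Integrable (F3 μ l j k) (poissonMeasure (μ k)) := by
  by_cases h1 : k = j <;> by_cases h2 : k = l
  · rw [F3_eq_eq_eq μ h1 h2]; subst h1; exact integrable_sub_const _
  · rw [F3_eq_eq_ne μ h1 h2]; subst h1; exact integrable_sub_mul _
  · rw [F3_eq_ne_eq μ h1 h2]; exact integrable_const 1
  · rw [F3_eq_ne_ne μ h1 h2]; exact integrable_coe

lemma F3_integral (l j k : Fin m) :
    ∫ n, F3 μ l j k n ∂poissonMeasure (μ k)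
      = if k = l then (if k = j then 0 else 1) else (μ k : ℝ) := by
  by_cases h1 : k = j <;> by_cases h2 : k = l
  · rw [F3_eq_eq_eq μ h1 h2, if_pos h2, if_pos h1]; subst h1; exact integral_sub_const
  · rw [F3_eq_eq_ne μ h1 h2, if_neg h2]; subst h1; exact integral_sub_mul
  · rw [F3_eq_ne_eq μ h1 h2, if_pos h2, if_neg h1]; simp
  · rw [F3_eq_ne_ne μ h1 h2, if_neg h2]; exact integral_coe

lemma F5_eq_of_eq (j : Fin m) : F5 μ j j = fun n : ℕ => (n : ℝ) - (μ j : ℝ) := by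
  funext n; simp [F5]

lemma F5_eq_of_ne {j k : Fin m} (h : k ≠ j) : F5 μ j k = fun _ : ℕ => (1 : ℝ) := by
  funext n; simp [F5, h]

lemma F5_integrable (j k : Fin m) : Integrable (F5 μ j k) (poissonMeasure (μ k)) := by
  by_cases h : k = j
  · subst h; rw [F5_eq_of_eq]; exact integrable_sub_const _
  · rw [F5_eq_of_ne μ h]; exact integrable_const 1

lemma F5_integral (j k : Fin m) :
    ∫ n, F5 μ j k n ∂poissonMeasure (μ k) = if k = j then 0 else 1 := by
  by_cases h : k = j
  · subst h; rw [F5_eq_of_eq, if_pos rfl]; exact integral_sub_const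
  · rw [F5_eq_of_ne μ h, if_neg h]; simp

/-! ### pointwise product identities -/

lemma F1_prod (l : Fin m) (x : Fin m → ℕ) :
    ∏ k, F1 l k (x k) = (x l : ℝ) * (∏ k ∈ univ.erase l, (x k : ℝ)) ^ 2 := by
  simp only [F1]
  rw [prod_ite_split l (fun k => (x k : ℝ)) (fun k => (x k : ℝ) ^ 2), ← Finset.prod_pow]

lemma F2_prod (l : Fin m) (x : Fin m → ℕ) :
    ∏ k, F2 l k (x k) = ∏ k ∈ univ.erase l, (x k : ℝ) := by
  simp only [F2]
  rw [prod_ite_split l (fun _ => 1) (fun k => (x k : ℝ)), one_mul]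

lemma F3_prod (l j : Fin m) (x : Fin m → ℕ) :
    ∏ k, F3 μ l j k (x k)
      = ((x j : ℝ) - (μ j : ℝ)) * ∏ k ∈ univ.erase l, (x k : ℝ) := by
  simp only [F3]
  rw [Finset.prod_mul_distrib,
    prod_ite_single j (fun k => ((x k : ℝ) - (μ j : ℝ))),
    prod_ite_split l (fun _ => 1) (fun k => (x k : ℝ)), one_mul]

lemma F5_prod (j : Fin m) (x : Fin m → ℕ) :
    ∏ k, F5 μ j k (x k) = (x j : ℝ) - (μ j : ℝ) := by
  simp only [F5]
  rw [prod_ite_single j (fun k => ((x k : ℝ) - (μ j : ℝ)))]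

/-! ### integrals of the pure products over the product measure -/

lemma EF1 (l : Fin m) :
    ∫ x : Fin m → ℕ, ∏ k, F1 l k (x k) ∂Measure.pi (fun j => poissonMeasure (μ j))
      = (∏ j, (μ j : ℝ)) * ∏ k ∈ univ.erase l, (1 + (μ k : ℝ)) := by
  rw [integral_pi_prod]
  simp_rw [F1_integral]
  rw [prod_ite_split l (fun k => (μ k : ℝ)) (fun k => (μ k : ℝ) * (1 + (μ k : ℝ))),
    Finset.prod_mul_distrib, ← mul_assoc,
    Finset.mul_prod_erase Finset.univ (fun k => (μ k : ℝ)) (Finset.mem_univ l)]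

lemma EF2 (l : Fin m) :
    ∫ x : Fin m → ℕ, ∏ k, F2 l k (x k) ∂Measure.pi (fun j => poissonMeasure (μ j))
      = ∏ k ∈ univ.erase l, (μ k : ℝ) := by
  rw [integral_pi_prod]
  simp_rw [F2_integral]
  rw [prod_ite_split l (fun _ => 1) (fun k => (μ k : ℝ)), one_mul]

lemma EF3 (l j : Fin m) :
    ∫ x : Fin m → ℕ, ∏ k, F3 μ l j k (x k) ∂Measure.pi (fun j => poissonMeasure (μ j))
      = if j = l then 0 else ∏ k ∈ univ.erase l, (μ k : ℝ) := by
  rw [integral_pi_prod]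
  simp_rw [F3_integral]
  rw [prod_ite_split l (fun k => if k = j then (0:ℝ) else 1) (fun k => (μ k : ℝ))]
  by_cases h : j = l
  · simp [h]
  · rw [if_neg (fun hh => h hh.symm), if_neg h, one_mul]

lemma EF4 :
    ∫ x : Fin m → ℕ, ∏ k, (x k : ℝ) ∂Measure.pi (fun j => poissonMeasure (μ j))
      = ∏ j, (μ j : ℝ) := by
  rw [integral_pi_prod (fun j => poissonMeasure (μ j)) (fun _ n => (n : ℝ))]
  simp_rw [integral_coe]

lemma EF5 (j : Fin m) :
    ∫ x : Fin m → ℕ, ∏ k, F5 μ j k (x k) ∂Measure.pi (fun j => poissonMeasure (μ j))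
      = 0 := by
  rw [integral_pi_prod]
  simp_rw [F5_integral]
  rw [prod_ite_split j (fun _ => (0:ℝ)) (fun _ => 1), zero_mul]

lemma IF1 (l : Fin m) : Integrable (fun x : Fin m → ℕ => ∏ k, F1 l k (x k))
    (Measure.pi (fun j => poissonMeasure (μ j))) :=
  integrable_pi_prod _ _ (fun k => F1_integrable μ l k)

lemma IF2 (l : Fin m) : Integrable (fun x : Fin m → ℕ => ∏ k, F2 l k (x k))
    (Measure.pi (fun j => poissonMeasure (μ j))) :=
  integrable_pi_prod _ _ (fun k => F2_integrable μ l k)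

lemma IF3 (l j : Fin m) : Integrable (fun x : Fin m → ℕ => ∏ k, F3 μ l j k (x k))
    (Measure.pi (fun j => poissonMeasure (μ j))) :=
  integrable_pi_prod _ _ (fun k => F3_integrable μ l j k)

lemma IF4 : Integrable (fun x : Fin m → ℕ => ∏ k, (x k : ℝ))
    (Measure.pi (fun j => poissonMeasure (μ j))) :=
  integrable_pi_prod _ (fun _ n => (n : ℝ)) (fun _ => integrable_coe)

lemma IF5 (j : Fin m) : Integrable (fun x : Fin m → ℕ => ∏ k, F5 μ j k (x k))
    (Measure.pi (fun j => poissonMeasure (μ j))) :=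
  integrable_pi_prod _ _ (fun k => F5_integrable μ j k)

end SdotZ

/-- The law of `m` independent Poisson random variables `X_j ~ Poisson (μ j)`,
as a product measure on `Fin m → ℕ`. -/
noncomputable def poissonPi {m : ℕ} (μ : Fin m → ℝ≥0) : Measure (Fin m → ℕ) :=
  Measure.pi fun j => poissonMeasure (μ j)

open SdotZ in
theorem expectation_Sdot_Z (m : ℕ) (hm : 2 ≤ m) (μ : Fin m → ℝ≥0) (hμ : ∀ j, 0 < μ j) :
    ∫ x : Fin m → ℕ, (∏ j, (x j : ℝ) - (∏ j, (μ j : ℝ)) * (1 + ∑ j, ((μ j : ℝ))⁻¹ * ((x j : ℝ) - (μ j : ℝ)))) * (∑ j, (∏ k ∈ univ.erase j, (x k : ℝ)) - (∏ j, (μ j : ℝ)) * ∑ j, ((μ j : ℝ))⁻¹) ∂(poissonPi μ)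
      = (∏ j, (μ j : ℝ)) * ∑ j, ∏ k ∈ univ.erase j, (1 + (μ k : ℝ)) - (∏ j, (μ j : ℝ)) ^ 2 * ((∑ j, ((μ j : ℝ))⁻¹) + (∑ j, ((μ j : ℝ))⁻¹) ^ 2 - (∑ j, ((μ j : ℝ))⁻¹ ^ 2)) := by
  classical
  have hcne : ∀ j, ((μ j : ℝ)) ≠ 0 := fun j => ne_of_gt (by exact_mod_cast hμ j)
  unfold poissonPi
  have key : ∀ x : Fin m → ℕ,
      ((∏ j, (x j : ℝ)) - (∏ j, (μ j : ℝ)) * (1 + ∑ j, ((μ j : ℝ))⁻¹ * ((x j : ℝ) - (μ j : ℝ))))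
        * ((∑ j, ∏ k ∈ univ.erase j, (x k : ℝ)) - (∏ j, (μ j : ℝ)) * ∑ j, ((μ j : ℝ))⁻¹)
      = (∑ l, ((∏ k, F1 l k (x k))
            - (∏ j, (μ j : ℝ)) * (∏ k, F2 l k (x k))
            - ∑ j, ((∏ i, (μ i : ℝ)) * ((μ j : ℝ))⁻¹) * (∏ k, F3 μ l j k (x k))))
        - ((∏ j, (μ j : ℝ)) * ∑ j, ((μ j : ℝ))⁻¹)
            * ((∏ k, (x k : ℝ)) - (∏ j, (μ j : ℝ))
              - ∑ j, ((∏ i, (μ i : ℝ)) * ((μ j : ℝ))⁻¹) * (∏ k, F5 μ j k (x k))) := by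
    intro x
    simp only [F1_prod, F2_prod, F3_prod, F5_prod]
    have hπ : ∀ l : Fin m, (∏ j, (x j : ℝ)) = (x l : ℝ) * ∏ k ∈ univ.erase l, (x k : ℝ) :=
      fun l => (Finset.mul_prod_erase univ _ (Finset.mem_univ l)).symm
    have hs3 : ∀ l : Fin m,
        ∑ j, ((∏ i, (μ i : ℝ)) * ((μ j : ℝ))⁻¹)
            * (((x j : ℝ) - (μ j : ℝ)) * ∏ k ∈ univ.erase l, (x k : ℝ))
        = (∏ i, (μ i : ℝ)) * (∏ k ∈ univ.erase l, (x k : ℝ))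
            * ∑ j, ((μ j : ℝ))⁻¹ * ((x j : ℝ) - (μ j : ℝ)) := by
      intro l
      rw [Finset.mul_sum]
      exact Finset.sum_congr rfl fun j _ => by ring
    have hs5 : ∑ j, ((∏ i, (μ i : ℝ)) * ((μ j : ℝ))⁻¹) * ((x j : ℝ) - (μ j : ℝ))
        = (∏ i, (μ i : ℝ)) * ∑ j, ((μ j : ℝ))⁻¹ * ((x j : ℝ) - (μ j : ℝ)) := by
      rw [Finset.mul_sum]
      exact Finset.sum_congr rfl fun j _ => by ring
    simp_rw [hs3]
    rw [hs5, Finset.sum_sub_distrib, Finset.sum_sub_distrib]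
    have h1 : ∑ l, (x l : ℝ) * (∏ k ∈ univ.erase l, (x k : ℝ)) ^ 2
        = ∑ l, (∏ j, (x j : ℝ)) * (∏ k ∈ univ.erase l, (x k : ℝ)) :=
      Finset.sum_congr rfl fun l _ => by rw [hπ l]; ring
    rw [h1, ← Finset.mul_sum, ← Finset.mul_sum]
    have h2 : ∑ l, (∏ i, (μ i : ℝ)) * (∏ k ∈ univ.erase l, (x k : ℝ))
          * ∑ j, ((μ j : ℝ))⁻¹ * ((x j : ℝ) - (μ j : ℝ))
        = (∏ i, (μ i : ℝ)) * (∑ j, ((μ j : ℝ))⁻¹ * ((x j : ℝ) - (μ j : ℝ)))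
          * ∑ l, ∏ k ∈ univ.erase l, (x k : ℝ) := by
      rw [Finset.mul_sum]
      exact Finset.sum_congr rfl fun l _ => by ring
    rw [h2]
    ring
  simp only [key]
  have IT : ∀ l : Fin m, Integrable (fun x : Fin m → ℕ =>
      (∏ k, F1 l k (x k)) - (∏ j, (μ j : ℝ)) * (∏ k, F2 l k (x k))
        - ∑ j, ((∏ i, (μ i : ℝ)) * ((μ j : ℝ))⁻¹) * (∏ k, F3 μ l j k (x k)))
      (Measure.pi fun j => poissonMeasure (μ j)) :=
    fun l => ((IF1 μ l).sub ((IF2 μ l).const_mul _)).sub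
      (integrable_finset_sum _ fun j _ => (IF3 μ l j).const_mul _)
  have IA : Integrable (fun x : Fin m → ℕ =>
      (∏ k, (x k : ℝ)) - (∏ j, (μ j : ℝ))
        - ∑ j, ((∏ i, (μ i : ℝ)) * ((μ j : ℝ))⁻¹) * (∏ k, F5 μ j k (x k)))
      (Measure.pi fun j => poissonMeasure (μ j)) :=
    ((IF4 μ).sub (integrable_const _)).sub
      (integrable_finset_sum _ fun j _ => (IF5 μ j).const_mul _)
  have IA1 : Integrable (fun x : Fin m → ℕ => (∏ k, (x k : ℝ)) - (∏ j, (μ j : ℝ)))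
      (Measure.pi fun j => poissonMeasure (μ j)) := (IF4 μ).sub (integrable_const _)
  have IT1 : ∀ l : Fin m, Integrable (fun x : Fin m → ℕ =>
      (∏ k, F1 l k (x k)) - (∏ j, (μ j : ℝ)) * (∏ k, F2 l k (x k)))
      (Measure.pi fun j => poissonMeasure (μ j)) :=
    fun l => (IF1 μ l).sub ((IF2 μ l).const_mul _)
  rw [integral_sub (integrable_finset_sum _ (fun l _ => IT l)) (IA.const_mul _),
      integral_finset_sum _ (fun l _ => IT l), integral_const_mul]
  have hA0 : ∫ x : Fin m → ℕ,
      ((∏ k, (x k : ℝ)) - (∏ j, (μ j : ℝ))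
        - ∑ j, ((∏ i, (μ i : ℝ)) * ((μ j : ℝ))⁻¹) * (∏ k, F5 μ j k (x k)))
      ∂(Measure.pi fun j => poissonMeasure (μ j)) = 0 := by
    rw [integral_sub IA1
        (integrable_finset_sum _ fun j _ => (IF5 μ j).const_mul _),
      integral_sub (IF4 μ) (integrable_const _),
      integral_finset_sum _ (fun j _ => (IF5 μ j).const_mul _)]
    simp_rw [integral_const_mul, EF5 μ, mul_zero, Finset.sum_const_zero, sub_zero, EF4 μ,
      integral_const]
    simp
  rw [hA0, mul_zero, sub_zero]
  have hQ : ∀ l : Fin m, ∏ k ∈ univ.erase l, (μ k : ℝ)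
      = (∏ j, (μ j : ℝ)) * ((μ l : ℝ))⁻¹ := by
    intro l
    rw [← Finset.prod_erase_mul univ _ (Finset.mem_univ l), mul_assoc,
      mul_inv_cancel₀ (hcne l), mul_one]
  have hT : ∀ l ∈ (univ : Finset (Fin m)),
      (∫ x : Fin m → ℕ, ((∏ k, F1 l k (x k)) - (∏ j, (μ j : ℝ)) * (∏ k, F2 l k (x k))
          - ∑ j, ((∏ i, (μ i : ℝ)) * ((μ j : ℝ))⁻¹) * (∏ k, F3 μ l j k (x k)))
        ∂(Measure.pi fun j => poissonMeasure (μ j)))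
      = (∏ j, (μ j : ℝ)) * (∏ k ∈ univ.erase l, (1 + (μ k : ℝ)))
        - (∏ j, (μ j : ℝ)) * ((∏ j, (μ j : ℝ)) * ((μ l : ℝ))⁻¹)
        - (∏ j, (μ j : ℝ)) * ((∏ j, (μ j : ℝ)) * ((μ l : ℝ))⁻¹)
            * ((∑ j, ((μ j : ℝ))⁻¹) - ((μ l : ℝ))⁻¹) := by
    intro l _
    rw [integral_sub (IT1 l)
        (integrable_finset_sum _ fun j _ => (IF3 μ l j).const_mul _),
      integral_sub (IF1 μ l) ((IF2 μ l).const_mul _),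
      integral_finset_sum _ (fun j _ => (IF3 μ l j).const_mul _)]
    simp_rw [integral_const_mul, EF3 μ]
    rw [EF1 μ l, EF2 μ l]
    have hsum : ∑ j, ((∏ i, (μ i : ℝ)) * ((μ j : ℝ))⁻¹)
          * (if j = l then 0 else ∏ k ∈ univ.erase l, (μ k : ℝ))
        = (∏ j, (μ j : ℝ)) * ((∏ j, (μ j : ℝ)) * ((μ l : ℝ))⁻¹)
            * ((∑ j, ((μ j : ℝ))⁻¹) - ((μ l : ℝ))⁻¹) := by
      rw [← Finset.sum_erase_add univ _ (Finset.mem_univ l), if_pos rfl, mul_zero, add_zero]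
      have hc : ∀ j ∈ univ.erase l, ((∏ i, (μ i : ℝ)) * ((μ j : ℝ))⁻¹)
            * (if j = l then 0 else ∏ k ∈ univ.erase l, (μ k : ℝ))
          = ((∏ i, (μ i : ℝ)) * (∏ k ∈ univ.erase l, (μ k : ℝ))) * ((μ j : ℝ))⁻¹ := by
        intro j hj
        rw [if_neg (Finset.mem_erase.mp hj).1]
        ring
      rw [Finset.sum_congr rfl hc, ← Finset.mul_sum,
        Finset.sum_erase_eq_sub (Finset.mem_univ l), hQ l]
    rw [hsum, hQ l]
  rw [Finset.sum_congr rfl hT, Finset.sum_sub_distrib, Finset.sum_sub_distrib, ← Finset.mul_sum]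
  have e2 : ∑ l, (∏ j, (μ j : ℝ)) * ((∏ j, (μ j : ℝ)) * ((μ l : ℝ))⁻¹)
      = (∏ j, (μ j : ℝ)) ^ 2 * ∑ j, ((μ j : ℝ))⁻¹ := by
    rw [Finset.mul_sum]
    exact Finset.sum_congr rfl fun l _ => by ring
  have e3 : ∑ l, (∏ j, (μ j : ℝ)) * ((∏ j, (μ j : ℝ)) * ((μ l : ℝ))⁻¹)
        * ((∑ j, ((μ j : ℝ))⁻¹) - ((μ l : ℝ))⁻¹)
      = (∏ j, (μ j : ℝ)) ^ 2 * ((∑ j, ((μ j : ℝ))⁻¹) * (∑ j, ((μ j : ℝ))⁻¹))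
        - (∏ j, (μ j : ℝ)) ^ 2 * ∑ j, ((μ j : ℝ))⁻¹ ^ 2 := by
    have step : ∀ l ∈ (univ : Finset (Fin m)),
        (∏ j, (μ j : ℝ)) * ((∏ j, (μ j : ℝ)) * ((μ l : ℝ))⁻¹)
          * ((∑ j, ((μ j : ℝ))⁻¹) - ((μ l : ℝ))⁻¹)
        = (∏ j, (μ j : ℝ)) ^ 2 * (((μ l : ℝ))⁻¹ * ∑ j, ((μ j : ℝ))⁻¹)
          - (∏ j, (μ j : ℝ)) ^ 2 * ((μ l : ℝ))⁻¹ ^ 2 := fun l _ => by ring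
    rw [Finset.sum_congr rfl step, Finset.sum_sub_distrib, ← Finset.mul_sum, ← Finset.mul_sum,
      ← Finset.sum_mul]
  rw [e2, e3]
  ring
end

section
/- Let ε_3 = (1/2)∏_{j=1}^m X_j(X_j−1)(X_j−2) − (3/2)(∏_{j=1}^m X_j)(∏_{j=1}^m X_j(X_j−1)) + (∏_{j=1}^m X_j)³. Then E[ε_3] = (1/2)p_1³ − (3/2)p_1² ∏_{j=1}^m(2+μ_j) + p_1 ∏_{j=1}^m(1+3μ_j+μ_j²). -/
open MeasureTheory ProbabilityTheory Finset
open scoped NNReal ENNReal Nat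

/-- The falling-factorial product is nonnegative at natural arguments. -/
lemma fall_nonneg (n k : ℕ) : 0 ≤ ∏ i ∈ Finset.range k, ((n : ℝ) - (i : ℝ)) := by
  rcases lt_or_ge n k with h | h
  · rw [Finset.prod_eq_zero (Finset.mem_range.mpr h) (by simp)]
  · exact Finset.prod_nonneg fun i hi => by
      have : (i : ℝ) ≤ (n : ℝ) := by
        exact_mod_cast ((Finset.mem_range.mp hi).le.trans h)
      linarith

/-- Factorial-moment computation for the Poisson distribution:
`∑ₙ e^{-r} rⁿ/n! · n(n-1)⋯(n-k+1) = r^k`. -/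
lemma hasSum_poisson_fall (r : ℝ≥0) (k : ℕ) :
    HasSum (fun n : ℕ => poissonPMFReal r n * ∏ i ∈ Finset.range k, ((n : ℝ) - (i : ℝ)))
      ((r : ℝ) ^ k) := by
  set f : ℕ → ℝ := fun n => poissonPMFReal r n * ∏ i ∈ Finset.range k, ((n : ℝ) - (i : ℝ))
    with hf
  have hzero : ∑ i ∈ Finset.range k, f i = 0 := by
    apply Finset.sum_eq_zero
    intro i hi
    simp only [hf]
    rw [Finset.prod_eq_zero hi (by simp), mul_zero]
  have hshift : ∀ n : ℕ, f (n + k) = (r : ℝ) ^ k * poissonPMFReal r n := by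
    intro n
    have hprod : ∏ i ∈ Finset.range k, (((n + k : ℕ) : ℝ) - (i : ℝ))
        = ((n + k).descFactorial k : ℝ) := by
      rw [Nat.descFactorial_eq_prod_range, Nat.cast_prod]
      apply Finset.prod_congr rfl
      intro i hi
      have hik : i ≤ n + k := ((Finset.mem_range.mp hi).le.trans (Nat.le_add_left k n))
      rw [Nat.cast_sub hik]
    have hfact : (n ! : ℝ) * ((n + k).descFactorial k : ℝ) = ((n + k)! : ℝ) := by
      have := Nat.factorial_mul_descFactorial (Nat.le_add_left k n)
      rw [Nat.add_sub_cancel] at this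
      exact_mod_cast this
    simp only [hf, poissonPMFReal]
    rw [hprod]
    have h1 : ((n + k)! : ℝ) ≠ 0 := Nat.cast_ne_zero.mpr (Nat.factorial_ne_zero _)
    have h2 : (n ! : ℝ) ≠ 0 := Nat.cast_ne_zero.mpr (Nat.factorial_ne_zero _)
    rw [pow_add, ← hfact]
    field_simp
  have key : HasSum (fun n : ℕ => f (n + k)) ((r : ℝ) ^ k) := by
    have := (poissonPMFRealSum r).mul_left ((r : ℝ) ^ k)
    rw [mul_one] at this
    exact this.congr_fun fun n => hshift n
  have := (hasSum_nat_add_iff (f := f) k).mp key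
  rwa [hzero, add_zero] at this

/-- Every real-valued function on `ℕ` whose Poisson-weighted absolute series is summable
is integrable for the Poisson measure. -/
lemma integrable_poisson_of_hasSum (r : ℝ≥0) (g : ℕ → ℝ) (hg : ∀ n, 0 ≤ g n) (c : ℝ)
    (h : HasSum (fun n => poissonPMFReal r n * g n) c) :
    Integrable g (poissonMeasure r) := by
  constructor
  · exact (measurable_of_countable g).aestronglyMeasurable
  · rw [HasFiniteIntegral]
    have hsing : ∀ a : ℕ, poissonMeasure r {a} = ENNReal.ofReal (poissonPMFReal r a) := by
      intro a
      rw [poissonMeasure_singleton]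
      rfl
    rw [lintegral_countable']
    have hterm : ∀ a : ℕ, ‖g a‖ₑ * poissonMeasure r {a}
        = ENNReal.ofReal (poissonPMFReal r a * g a) := by
      intro a
      have hn : ‖g a‖ₑ = ENNReal.ofReal (g a) := by
        rw [← ofReal_norm, Real.norm_eq_abs, abs_of_nonneg (hg a)]
      rw [hsing a, hn, ← ENNReal.ofReal_mul (hg a), mul_comm]
    simp_rw [hterm]
    rw [← ENNReal.ofReal_tsum_of_nonneg
      (fun n => mul_nonneg poissonPMFReal_nonneg (hg n)) h.summable]
    exact ENNReal.ofReal_lt_top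

/-- The Poisson expectation of a nonnegative function is given by the weighted series. -/
lemma integral_poisson_of_hasSum (r : ℝ≥0) (g : ℕ → ℝ) (hg : ∀ n, 0 ≤ g n) (c : ℝ)
    (h : HasSum (fun n => poissonPMFReal r n * g n) c) :
    ∫ n, g n ∂(poissonMeasure r) = c := by
  rw [integral_countable
    (integrable_poisson_of_hasSum r g hg c h)]
  have : ∀ a : ℕ, (poissonMeasure r).real {a} • g a = poissonPMFReal r a * g a := by
    intro a
    rw [smul_eq_mul, poissonMeasure_real_singleton]
    rfl
  simp_rw [this]
  exact h.tsum_eq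

lemma int_P1 (r : ℝ≥0) :
    ∫ n : ℕ, ((n : ℝ) * ((n : ℝ) - 1) * ((n : ℝ) - 2)) ∂(poissonMeasure r) = (r : ℝ) ^ 3 := by
  have heq : ∀ n : ℕ, (n : ℝ) * ((n : ℝ) - 1) * ((n : ℝ) - 2)
      = ∏ i ∈ Finset.range 3, ((n : ℝ) - (i : ℝ)) := by
    intro n
    simp only [Finset.prod_range_succ, Finset.prod_range_zero, Nat.cast_ofNat,
      Nat.cast_one, Nat.cast_zero]
    ring
  have hg : ∀ n : ℕ, 0 ≤ (n : ℝ) * ((n : ℝ) - 1) * ((n : ℝ) - 2) := by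
    intro n; rw [heq]; exact fall_nonneg n 3
  apply integral_poisson_of_hasSum r _ hg
  have := hasSum_poisson_fall r 3
  exact this.congr_fun fun n => by rw [heq]

lemma int_P2 (r : ℝ≥0) :
    ∫ n : ℕ, ((n : ℝ) * ((n : ℝ) * ((n : ℝ) - 1))) ∂(poissonMeasure r)
      = (r : ℝ) ^ 2 * (2 + (r : ℝ)) := by
  have hg : ∀ n : ℕ, 0 ≤ (n : ℝ) * ((n : ℝ) * ((n : ℝ) - 1)) := by
    intro n
    rcases Nat.eq_zero_or_pos n with h | h
    · simp [h]
    · have h1 : (1 : ℝ) ≤ (n : ℝ) := by exact_mod_cast h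
      have h0 : (0:ℝ) ≤ (n:ℝ) := n.cast_nonneg
      exact mul_nonneg h0 (mul_nonneg h0 (by linarith))
  apply integral_poisson_of_hasSum r _ hg
  have h3 := hasSum_poisson_fall r 3
  have h2 := (hasSum_poisson_fall r 2).mul_left 2
  have hsum := h3.add h2
  have hval : (r : ℝ) ^ 3 + 2 * (r : ℝ) ^ 2 = (r : ℝ) ^ 2 * (2 + (r : ℝ)) := by ring
  rw [hval] at hsum
  exact hsum.congr_fun fun n => by
    simp only [Finset.prod_range_succ, Finset.prod_range_zero, Nat.cast_ofNat,
      Nat.cast_one, Nat.cast_zero]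
    ring

lemma int_P3 (r : ℝ≥0) :
    ∫ n : ℕ, ((n : ℝ) ^ 3) ∂(poissonMeasure r)
      = (r : ℝ) * (1 + 3 * (r : ℝ) + (r : ℝ) ^ 2) := by
  have hg : ∀ n : ℕ, 0 ≤ (n : ℝ) ^ 3 := fun n => by positivity
  apply integral_poisson_of_hasSum r _ hg
  have h3 := hasSum_poisson_fall r 3
  have h2 := (hasSum_poisson_fall r 2).mul_left 3
  have h1 := (hasSum_poisson_fall r 1)
  have hsum := (h3.add h2).add h1
  have hval : (r : ℝ) ^ 3 + 3 * (r : ℝ) ^ 2 + (r : ℝ) ^ 1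
      = (r : ℝ) * (1 + 3 * (r : ℝ) + (r : ℝ) ^ 2) := by ring
  rw [hval] at hsum
  exact hsum.congr_fun fun n => by
    simp only [Finset.prod_range_succ, Finset.prod_range_zero, Nat.cast_ofNat,
      Nat.cast_one, Nat.cast_zero]
    ring

/-- Fubini for `poissonPi`: integral of a product of coordinate functions. -/
lemma poissonPi_integral_prod {m : ℕ} (μ : Fin m → ℝ≥0) (f : Fin m → ℕ → ℝ) :
    ∫ x : Fin m → ℕ, ∏ j, f j (x j) ∂(poissonPi μ)
      = ∏ j, ∫ n, f j n ∂(poissonMeasure (μ j)) := by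
  exact @MeasureTheory.integral_fin_nat_prod_eq_prod ℝ _ m (fun _ : Fin m => ℕ)
    (fun _ => inferInstance) (fun i => poissonMeasure (μ i))
    (fun i => inferInstanceAs (SigmaFinite (poissonMeasure (μ i)))) f

/-- Integrability of a product of integrable coordinate functions for `poissonPi`. -/
lemma poissonPi_integrable_prod {m : ℕ} (μ : Fin m → ℝ≥0) (f : Fin m → ℕ → ℝ)
    (hf : ∀ j, Integrable (f j) (poissonMeasure (μ j))) :
    Integrable (fun x : Fin m → ℕ => ∏ j, f j (x j)) (poissonPi μ) := by
  exact @MeasureTheory.Integrable.fin_nat_prod ℝ _ m (fun _ : Fin m => ℕ)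
    (fun _ => inferInstance) (fun i => poissonMeasure (μ i))
    (fun i => inferInstanceAs (SigmaFinite (poissonMeasure (μ i)))) f hf

theorem expectation_eps3 (m : ℕ) (hm : 2 ≤ m) (μ : Fin m → ℝ≥0) (hμ : ∀ j, 0 < μ j) :
    ∫ x : Fin m → ℕ, ((1/2 : ℝ) * ∏ j, ((x j : ℝ) * ((x j : ℝ) - 1) * ((x j : ℝ) - 2)) - (3/2 : ℝ) * (∏ j, (x j : ℝ)) * (∏ j, ((x j : ℝ) * ((x j : ℝ) - 1))) + (∏ j, (x j : ℝ)) ^ 3) ∂(poissonPi μ)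
      = (1/2 : ℝ) * (∏ j, (μ j : ℝ)) ^ 3 - (3/2 : ℝ) * (∏ j, (μ j : ℝ)) ^ 2 * ∏ j, (2 + (μ j : ℝ)) + (∏ j, (μ j : ℝ)) * ∏ j, (1 + 3 * (μ j : ℝ) + (μ j : ℝ) ^ 2) := by
  classical
  set f1 : Fin m → ℕ → ℝ := fun _ n => (n : ℝ) * ((n : ℝ) - 1) * ((n : ℝ) - 2) with hf1
  set f2 : Fin m → ℕ → ℝ := fun _ n => (n : ℝ) * ((n : ℝ) * ((n : ℝ) - 1)) with hf2
  set f3 : Fin m → ℕ → ℝ := fun _ n => (n : ℝ) ^ 3 with hf3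
  -- integrability of coordinate functions
  have hint1 : ∀ j, Integrable (f1 j) (poissonMeasure (μ j)) := by
    intro j
    have heq : ∀ n : ℕ, (n : ℝ) * ((n : ℝ) - 1) * ((n : ℝ) - 2)
        = ∏ i ∈ Finset.range 3, ((n : ℝ) - (i : ℝ)) := by
      intro n
      simp only [Finset.prod_range_succ, Finset.prod_range_zero, Nat.cast_ofNat,
        Nat.cast_one, Nat.cast_zero]
      ring
    apply integrable_poisson_of_hasSum (μ j) _
      (fun n => by simp only [hf1]; rw [heq n]; exact fall_nonneg n 3) (((μ j : ℝ)) ^ 3)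
    exact (hasSum_poisson_fall (μ j) 3).congr_fun fun n => by simp only [hf1]; rw [heq n]
  have hint2 : ∀ j, Integrable (f2 j) (poissonMeasure (μ j)) := by
    intro j
    have hg : ∀ n : ℕ, 0 ≤ f2 j n := by
      intro n
      rcases Nat.eq_zero_or_pos n with h | h
      · simp [hf2, h]
      · have h1 : (1 : ℝ) ≤ (n : ℝ) := by exact_mod_cast h
        have h0 : (0:ℝ) ≤ (n:ℝ) := n.cast_nonneg
        simp only [hf2]
        exact mul_nonneg h0 (mul_nonneg h0 (by linarith))
    have h3 := hasSum_poisson_fall (μ j) 3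
    have h2 := (hasSum_poisson_fall (μ j) 2).mul_left 2
    have hsum := h3.add h2
    apply integrable_poisson_of_hasSum (μ j) _ hg _
      (hsum.congr_fun fun n => by
        simp only [hf2, Finset.prod_range_succ, Finset.prod_range_zero, Nat.cast_ofNat,
          Nat.cast_one, Nat.cast_zero]
        ring)
  have hint3 : ∀ j, Integrable (f3 j) (poissonMeasure (μ j)) := by
    intro j
    have h3 := hasSum_poisson_fall (μ j) 3
    have h2 := (hasSum_poisson_fall (μ j) 2).mul_left 3
    have h1 := hasSum_poisson_fall (μ j) 1
    have hsum := (h3.add h2).add h1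
    apply integrable_poisson_of_hasSum (μ j) _ (fun n => by positivity) _
      (hsum.congr_fun fun n => by
        simp only [hf3, Finset.prod_range_succ, Finset.prod_range_zero, Nat.cast_ofNat,
          Nat.cast_one, Nat.cast_zero]
        ring)
  have I1 := poissonPi_integrable_prod μ f1 hint1
  have I2 := poissonPi_integrable_prod μ f2 hint2
  have I3 := poissonPi_integrable_prod μ f3 hint3
  -- rewrite integrand
  have hpt : ∀ x : Fin m → ℕ,
      ((1/2 : ℝ) * ∏ j, ((x j : ℝ) * ((x j : ℝ) - 1) * ((x j : ℝ) - 2))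
        - (3/2 : ℝ) * (∏ j, (x j : ℝ)) * (∏ j, ((x j : ℝ) * ((x j : ℝ) - 1)))
        + (∏ j, (x j : ℝ)) ^ 3)
      = (1/2 : ℝ) * ∏ j, f1 j (x j) - (3/2 : ℝ) * ∏ j, f2 j (x j) + ∏ j, f3 j (x j) := by
    intro x
    simp only [hf1, hf2, hf3]
    rw [mul_assoc, ← Finset.prod_mul_distrib, ← Finset.prod_pow]
  rw [integral_congr_ae (Filter.Eventually.of_forall hpt)]
  have IA : Integrable (fun x : Fin m → ℕ =>
      (1/2 : ℝ) * ∏ j, f1 j (x j) - (3/2 : ℝ) * ∏ j, f2 j (x j)) (poissonPi μ) :=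
    (I1.const_mul _).sub (I2.const_mul _)
  have IB : Integrable (fun x : Fin m → ℕ => (1/2 : ℝ) * ∏ j, f1 j (x j)) (poissonPi μ) :=
    I1.const_mul _
  have IC : Integrable (fun x : Fin m → ℕ => (3/2 : ℝ) * ∏ j, f2 j (x j)) (poissonPi μ) :=
    I2.const_mul _
  rw [integral_add IA I3, integral_sub IB IC,
    integral_const_mul, integral_const_mul,
    poissonPi_integral_prod μ f1, poissonPi_integral_prod μ f2, poissonPi_integral_prod μ f3]
  have e1 : ∀ j, ∫ n, f1 j n ∂(poissonMeasure (μ j)) = ((μ j : ℝ)) ^ 3 := fun j => int_P1 (μ j)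
  have e2 : ∀ j, ∫ n, f2 j n ∂(poissonMeasure (μ j))
      = ((μ j : ℝ)) ^ 2 * (2 + (μ j : ℝ)) := fun j => int_P2 (μ j)
  have e3 : ∀ j, ∫ n, f3 j n ∂(poissonMeasure (μ j))
      = (μ j : ℝ) * (1 + 3 * (μ j : ℝ) + (μ j : ℝ) ^ 2) := fun j => int_P3 (μ j)
  rw [Finset.prod_congr rfl fun j _ => e1 j, Finset.prod_congr rfl fun j _ => e2 j,
    Finset.prod_congr rfl fun j _ => e3 j,
    Finset.prod_pow, Finset.prod_mul_distrib, Finset.prod_mul_distrib, Finset.prod_pow]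
  ring
end

section
/- Let ε_4 = (1/6)∏_{j=1}^m X_j(X_j−1)(X_j−2)(X_j−3) − (2/3)(∏_{j=1}^m X_j)(∏_{j=1}^m X_j(X_j−1)(X_j−2)) − (1/2)(∏_{j=1}^m X_j(X_j−1))² + 2(∏_{j=1}^m X_j)²(∏_{j=1}^m X_j(X_j−1)) − (∏_{j=1}^m X_j)⁴. Then E[ε_4] = (1/6)p_1⁴ − (2/3)p_1³∏_{j=1}^m(3+μ_j) − (1/2)p_1²∏_{j=1}^m(2+4μ_j+μ_j²) + 2p_1²∏_{j=1}^m(4+5μ_j+μ_j²) − p_1∏_{j=1}^m(1+7μ_j+6μ_j²+μ_j³). -/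
open MeasureTheory ProbabilityTheory Finset
open scoped NNReal

open Real in
theorem my_integrable_pi {n : ℕ} (ν : Fin n → Measure ℕ) [∀ i, IsProbabilityMeasure (ν i)]
    {f : Fin n → ℕ → ℝ} (hf : ∀ i, Integrable (f i) (ν i)) :
    Integrable (fun x : Fin n → ℕ => ∏ i, f i (x i)) (Measure.pi ν) := by
  induction n with
  | zero => simp only [Finset.univ_eq_empty, Finset.prod_empty]
            exact integrable_const 1
  | succ n n_ih =>
      have := ((measurePreserving_piFinSuccAbove ν 0).symm)
      rw [← this.integrable_comp_emb (MeasurableEquiv.measurableEmbedding _)]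
      simp_rw [MeasurableEquiv.piFinSuccAbove_symm_apply, Fin.insertNthEquiv,
        Fin.prod_univ_succ, Fin.insertNth_zero]
      simp only [Fin.zero_succAbove, Function.comp_def, Fin.cons_zero, Fin.cons_succ,
        Equiv.coe_fn_mk]
      have : Integrable (fun (x : Fin n → ℕ) ↦ ∏ j, f (Fin.succ j) (x j))
          (Measure.pi fun j => ν (Fin.succ j)) := n_ih _ (fun i ↦ hf _)
      exact Integrable.mul_prod (hf 0) this

theorem my_integral_pi {n : ℕ} (ν : Fin n → Measure ℕ) [∀ i, IsProbabilityMeasure (ν i)]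
    (f : Fin n → ℕ → ℝ) :
    ∫ x : Fin n → ℕ, ∏ i, f i (x i) ∂Measure.pi ν = ∏ i, ∫ x, f i x ∂ν i := by
  induction n with
  | zero => simp
  | succ n n_ih =>
      calc
        _ = ∫ x : ℕ × (Fin n → ℕ),
            f 0 x.1 * ∏ i : Fin n, f (Fin.succ i) (x.2 i)
            ∂(ν 0).prod (Measure.pi fun j => ν (Fin.succ j)) := by
          rw [← ((measurePreserving_piFinSuccAbove ν 0).symm).integral_comp']
          simp_rw [MeasurableEquiv.piFinSuccAbove_symm_apply, Fin.insertNthEquiv,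
            Fin.prod_univ_succ, Fin.insertNth_zero, Equiv.coe_fn_mk, Fin.cons_succ,
            Fin.zero_succAbove, cast_eq, Fin.cons_zero]
        _ = (∫ x, f 0 x ∂ν 0) * ∏ i : Fin n, ∫ x, f (Fin.succ i) x ∂ν (Fin.succ i) := by
          rw [← n_ih, ← integral_prod_mul]
        _ = ∏ i, ∫ x, f i x ∂ν i := by rw [Fin.prod_univ_succ]

open Real in
lemma poisson_hasSum (r : ℝ≥0) (k : ℕ) :
    HasSum (fun n => poissonPMFReal r n * (n.descFactorial k : ℝ)) ((r : ℝ) ^ k) := by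
  have base := (poissonPMFRealSum r).mul_left ((r : ℝ) ^ k)
  rw [mul_one] at base
  have hz : ∀ x ∉ Set.range (fun j : ℕ => j + k),
      poissonPMFReal r x * (x.descFactorial k : ℝ) = 0 := by
    intro n hn
    have hnk : n < k := by
      by_contra h
      exact hn ⟨n - k, by simpa using Nat.sub_add_cancel (le_of_not_gt h)⟩
    simp [Nat.descFactorial_of_lt hnk]
  rw [← Function.Injective.hasSum_iff (add_left_injective k) hz]
  have heq : (fun j : ℕ => poissonPMFReal r (j + k) * ((j + k).descFactorial k : ℝ))
      = fun j => (r : ℝ) ^ k * poissonPMFReal r j := by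
    funext j
    have hd := Nat.factorial_mul_descFactorial (n := j + k) (k := k) (Nat.le_add_left k j)
    rw [Nat.add_sub_cancel] at hd
    have hd' : (Nat.factorial j : ℝ) * ((j + k).descFactorial k : ℝ)
        = (Nat.factorial (j + k) : ℝ) := by exact_mod_cast congrArg (Nat.cast : ℕ → ℝ) hd
    have h1 : (Nat.factorial (j + k) : ℝ) ≠ 0 := Nat.cast_ne_zero.mpr (Nat.factorial_ne_zero _)
    have h2 : (Nat.factorial j : ℝ) ≠ 0 := Nat.cast_ne_zero.mpr (Nat.factorial_ne_zero _)
    unfold poissonPMFReal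
    rw [pow_add]
    field_simp
    linear_combination ((r : ℝ) ^ j * (r : ℝ) ^ k) * hd'
  simp only [Function.comp_def]
  rw [heq]
  exact base

open Real in
lemma poisson_integrable (r : ℝ≥0) (k : ℕ) :
    Integrable (fun n => (n.descFactorial k : ℝ)) (poissonMeasure r) := by
  constructor
  · exact (measurable_from_top).aestronglyMeasurable
  · rw [HasFiniteIntegral]
    have hμ : ∀ n : ℕ, (poissonMeasure r) {n} = ENNReal.ofReal (poissonPMFReal r n) := by
      intro n
      rw [poissonMeasure_singleton]
      rfl
    calc ∫⁻ n, ‖(n.descFactorial k : ℝ)‖₊ ∂poissonMeasure r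
        = ∑' n : ℕ, ‖(n.descFactorial k : ℝ)‖₊ * (poissonMeasure r) {n} :=
          lintegral_countable' _
      _ = ∑' n : ℕ, ENNReal.ofReal (poissonPMFReal r n * (n.descFactorial k : ℝ)) := by
          congr 1; funext n
          rw [hμ n, ENNReal.ofReal_mul poissonPMFReal_nonneg, mul_comm]
          congr 1
          exact Real.enorm_eq_ofReal (Nat.cast_nonneg _)
      _ < ⊤ := by
          rw [← ENNReal.ofReal_tsum_of_nonneg
            (fun n => mul_nonneg poissonPMFReal_nonneg (Nat.cast_nonneg _))
            (poisson_hasSum r k).summable]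
          exact ENNReal.ofReal_lt_top

open Real in
lemma poisson_integral (r : ℝ≥0) (k : ℕ) :
    ∫ n, (n.descFactorial k : ℝ) ∂poissonMeasure r = (r : ℝ) ^ k := by
  rw [integral_poissonMeasure' (poisson_integrable r k)]
  have h : ∀ n : ℕ, ((poissonPMF r n).toReal) = poissonPMFReal r n := fun n =>
    ENNReal.toReal_ofReal poissonPMFReal_nonneg
  simp_rw [smul_eq_mul]
  exact (poisson_hasSum r k).tsum_eq

lemma desc_succ_real (n k : ℕ) :
    ((n.descFactorial (k + 1) : ℝ)) = (n.descFactorial k : ℝ) * ((n : ℝ) - k) := by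
  rcases lt_or_ge n k with h | h
  · rw [Nat.descFactorial_of_lt (h.trans (Nat.lt_succ_self k)), Nat.descFactorial_of_lt h]
    simp
  · rw [Nat.descFactorial_succ, Nat.cast_mul, Nat.cast_sub h, mul_comm]

lemma desc1 (n : ℕ) : (n.descFactorial 1 : ℝ) = (n : ℝ) := by simp
lemma desc2 (n : ℕ) : (n.descFactorial 2 : ℝ) = (n : ℝ) * ((n : ℝ) - 1) := by
  rw [desc_succ_real, desc1]; norm_num
lemma desc3 (n : ℕ) : (n.descFactorial 3 : ℝ) = (n : ℝ) * ((n : ℝ) - 1) * ((n : ℝ) - 2) := by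
  rw [desc_succ_real, desc2]; norm_num
lemma desc4 (n : ℕ) : (n.descFactorial 4 : ℝ)
    = (n : ℝ) * ((n : ℝ) - 1) * ((n : ℝ) - 2) * ((n : ℝ) - 3) := by
  rw [desc_succ_real, desc3]; norm_num

noncomputable def combPoly (a b c d : ℝ) (n : ℕ) : ℝ :=
  a * (n.descFactorial 4 : ℝ) + b * (n.descFactorial 3 : ℝ)
    + c * (n.descFactorial 2 : ℝ) + d * (n.descFactorial 1 : ℝ)


lemma comb_integrable (r : ℝ≥0) (a b c d : ℝ) :
    Integrable (combPoly a b c d) (poissonMeasure r) :=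
  ((((poisson_integrable r 4).const_mul a).add ((poisson_integrable r 3).const_mul b)).add
      ((poisson_integrable r 2).const_mul c)).add ((poisson_integrable r 1).const_mul d)

lemma comb_integral (r : ℝ≥0) (a b c d : ℝ) :
    ∫ n, combPoly a b c d n ∂poissonMeasure r
      = a * (r : ℝ) ^ 4 + b * (r : ℝ) ^ 3 + c * (r : ℝ) ^ 2 + d * (r : ℝ) := by
  unfold combPoly
  have i4 : Integrable (fun n : ℕ => a * (n.descFactorial 4 : ℝ)) (poissonMeasure r) :=
    (poisson_integrable r 4).const_mul a
  have i3 : Integrable (fun n : ℕ => b * (n.descFactorial 3 : ℝ)) (poissonMeasure r) :=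
    (poisson_integrable r 3).const_mul b
  have i2 : Integrable (fun n : ℕ => c * (n.descFactorial 2 : ℝ)) (poissonMeasure r) :=
    (poisson_integrable r 2).const_mul c
  have i1 : Integrable (fun n : ℕ => d * (n.descFactorial 1 : ℝ)) (poissonMeasure r) :=
    (poisson_integrable r 1).const_mul d
  have i43 : Integrable (fun n : ℕ => a * (n.descFactorial 4 : ℝ)
      + b * (n.descFactorial 3 : ℝ)) (poissonMeasure r) := by exact i4.add i3
  have i432 : Integrable (fun n : ℕ => a * (n.descFactorial 4 : ℝ)
      + b * (n.descFactorial 3 : ℝ) + c * (n.descFactorial 2 : ℝ)) (poissonMeasure r) := by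
    exact i43.add i2
  rw [integral_add i432 i1, integral_add i43 i2, integral_add i4 i3,
    integral_const_mul, integral_const_mul, integral_const_mul, integral_const_mul,
    poisson_integral, poisson_integral, poisson_integral, poisson_integral, pow_one]

lemma combA (n : ℕ) : combPoly 1 0 0 0 n
    = (n : ℝ) * ((n : ℝ) - 1) * ((n : ℝ) - 2) * ((n : ℝ) - 3) := by
  unfold combPoly; rw [desc4, desc3, desc2, desc1]; ring
lemma combB (n : ℕ) : combPoly 1 3 0 0 n
    = (n : ℝ) * ((n : ℝ) * ((n : ℝ) - 1) * ((n : ℝ) - 2)) := by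
  unfold combPoly; rw [desc4, desc3, desc2, desc1]; ring
lemma combC (n : ℕ) : combPoly 1 4 2 0 n = ((n : ℝ) * ((n : ℝ) - 1)) ^ 2 := by
  unfold combPoly; rw [desc4, desc3, desc2, desc1]; ring
lemma combD (n : ℕ) : combPoly 1 5 4 0 n = (n : ℝ) ^ 2 * ((n : ℝ) * ((n : ℝ) - 1)) := by
  unfold combPoly; rw [desc4, desc3, desc2, desc1]; ring
lemma combE (n : ℕ) : combPoly 1 6 7 1 n = (n : ℝ) ^ 4 := by
  unfold combPoly; rw [desc4, desc3, desc2, desc1]; ring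

theorem expectation_eps4 (m : ℕ) (hm : 2 ≤ m) (μ : Fin m → ℝ≥0) (hμ : ∀ j, 0 < μ j) :
    ∫ x : Fin m → ℕ, ((1/6 : ℝ) * ∏ j, ((x j : ℝ) * ((x j : ℝ) - 1) * ((x j : ℝ) - 2) * ((x j : ℝ) - 3)) - (2/3 : ℝ) * (∏ j, (x j : ℝ)) * (∏ j, ((x j : ℝ) * ((x j : ℝ) - 1) * ((x j : ℝ) - 2))) - (1/2 : ℝ) * (∏ j, ((x j : ℝ) * ((x j : ℝ) - 1))) ^ 2 + 2 * (∏ j, (x j : ℝ)) ^ 2 * (∏ j, ((x j : ℝ) * ((x j : ℝ) - 1))) - (∏ j, (x j : ℝ)) ^ 4) ∂(poissonPi μ)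
      = (1/6 : ℝ) * (∏ j, (μ j : ℝ)) ^ 4 - (2/3 : ℝ) * (∏ j, (μ j : ℝ)) ^ 3 * ∏ j, (3 + (μ j : ℝ)) - (1/2 : ℝ) * (∏ j, (μ j : ℝ)) ^ 2 * ∏ j, (2 + 4 * (μ j : ℝ) + (μ j : ℝ) ^ 2) + 2 * (∏ j, (μ j : ℝ)) ^ 2 * ∏ j, (4 + 5 * (μ j : ℝ) + (μ j : ℝ) ^ 2) - (∏ j, (μ j : ℝ)) * ∏ j, (1 + 7 * (μ j : ℝ) + 6 * (μ j : ℝ) ^ 2 + (μ j : ℝ) ^ 3) := by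
  rw [poissonPi]
  set ν : Fin m → Measure ℕ := fun j => poissonMeasure (μ j) with hν
  have hint : ∀ x : Fin m → ℕ,
      ((1/6 : ℝ) * ∏ j, ((x j : ℝ) * ((x j : ℝ) - 1) * ((x j : ℝ) - 2) * ((x j : ℝ) - 3))
        - (2/3 : ℝ) * (∏ j, (x j : ℝ)) * (∏ j, ((x j : ℝ) * ((x j : ℝ) - 1) * ((x j : ℝ) - 2)))
        - (1/2 : ℝ) * (∏ j, ((x j : ℝ) * ((x j : ℝ) - 1))) ^ 2
        + 2 * (∏ j, (x j : ℝ)) ^ 2 * (∏ j, ((x j : ℝ) * ((x j : ℝ) - 1)))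
        - (∏ j, (x j : ℝ)) ^ 4)
      = (1/6 : ℝ) * ∏ j, combPoly 1 0 0 0 (x j)
        - (2/3 : ℝ) * ∏ j, combPoly 1 3 0 0 (x j)
        - (1/2 : ℝ) * ∏ j, combPoly 1 4 2 0 (x j)
        + 2 * ∏ j, combPoly 1 5 4 0 (x j)
        - ∏ j, combPoly 1 6 7 1 (x j) := by
    intro x
    have pA : ∏ j, combPoly 1 0 0 0 (x j)
        = ∏ j, ((x j : ℝ) * ((x j : ℝ) - 1) * ((x j : ℝ) - 2) * ((x j : ℝ) - 3)) :=
      Finset.prod_congr rfl fun j _ => combA (x j)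
    have pB : ∏ j, combPoly 1 3 0 0 (x j)
        = (∏ j, (x j : ℝ)) * ∏ j, ((x j : ℝ) * ((x j : ℝ) - 1) * ((x j : ℝ) - 2)) := by
      rw [← Finset.prod_mul_distrib]
      exact Finset.prod_congr rfl fun j _ => combB (x j)
    have pC : ∏ j, combPoly 1 4 2 0 (x j)
        = (∏ j, ((x j : ℝ) * ((x j : ℝ) - 1))) ^ 2 := by
      rw [← Finset.prod_pow]
      exact Finset.prod_congr rfl fun j _ => combC (x j)
    have pD : ∏ j, combPoly 1 5 4 0 (x j)
        = (∏ j, (x j : ℝ)) ^ 2 * ∏ j, ((x j : ℝ) * ((x j : ℝ) - 1)) := by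
      rw [← Finset.prod_pow, ← Finset.prod_mul_distrib]
      exact Finset.prod_congr rfl fun j _ => combD (x j)
    have pE : ∏ j, combPoly 1 6 7 1 (x j) = (∏ j, (x j : ℝ)) ^ 4 := by
      rw [← Finset.prod_pow]
      exact Finset.prod_congr rfl fun j _ => combE (x j)
    rw [pA, pB, pC, pD, pE]
    ring
  rw [show (fun x : Fin m → ℕ =>
      ((1/6 : ℝ) * ∏ j, ((x j : ℝ) * ((x j : ℝ) - 1) * ((x j : ℝ) - 2) * ((x j : ℝ) - 3))
        - (2/3 : ℝ) * (∏ j, (x j : ℝ)) * (∏ j, ((x j : ℝ) * ((x j : ℝ) - 1) * ((x j : ℝ) - 2)))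
        - (1/2 : ℝ) * (∏ j, ((x j : ℝ) * ((x j : ℝ) - 1))) ^ 2
        + 2 * (∏ j, (x j : ℝ)) ^ 2 * (∏ j, ((x j : ℝ) * ((x j : ℝ) - 1)))
        - (∏ j, (x j : ℝ)) ^ 4))
      = fun x : Fin m → ℕ =>
        ((1/6 : ℝ) * ∏ j, combPoly 1 0 0 0 (x j)
        - (2/3 : ℝ) * ∏ j, combPoly 1 3 0 0 (x j)
        - (1/2 : ℝ) * ∏ j, combPoly 1 4 2 0 (x j)
        + 2 * ∏ j, combPoly 1 5 4 0 (x j)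
        - ∏ j, combPoly 1 6 7 1 (x j)) from funext hint]
  have iA : Integrable (fun x : Fin m → ℕ => ∏ j, combPoly 1 0 0 0 (x j)) (Measure.pi ν) :=
    my_integrable_pi ν fun i => comb_integrable _ _ _ _ _
  have iB : Integrable (fun x : Fin m → ℕ => ∏ j, combPoly 1 3 0 0 (x j)) (Measure.pi ν) :=
    my_integrable_pi ν fun i => comb_integrable _ _ _ _ _
  have iC : Integrable (fun x : Fin m → ℕ => ∏ j, combPoly 1 4 2 0 (x j)) (Measure.pi ν) :=
    my_integrable_pi ν fun i => comb_integrable _ _ _ _ _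
  have iD : Integrable (fun x : Fin m → ℕ => ∏ j, combPoly 1 5 4 0 (x j)) (Measure.pi ν) :=
    my_integrable_pi ν fun i => comb_integrable _ _ _ _ _
  have iE : Integrable (fun x : Fin m → ℕ => ∏ j, combPoly 1 6 7 1 (x j)) (Measure.pi ν) :=
    my_integrable_pi ν fun i => comb_integrable _ _ _ _ _
  have iA' := iA.const_mul (1/6 : ℝ)
  have iB' := iB.const_mul (2/3 : ℝ)
  have iC' := iC.const_mul (1/2 : ℝ)
  have iD' := iD.const_mul (2 : ℝ)
  have j1 : Integrable (fun x : Fin m → ℕ => (1/6 : ℝ) * ∏ j, combPoly 1 0 0 0 (x j)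
      - (2/3 : ℝ) * ∏ j, combPoly 1 3 0 0 (x j)) (Measure.pi ν) := by exact iA'.sub iB'
  have j2 : Integrable (fun x : Fin m → ℕ => (1/6 : ℝ) * ∏ j, combPoly 1 0 0 0 (x j)
      - (2/3 : ℝ) * ∏ j, combPoly 1 3 0 0 (x j)
      - (1/2 : ℝ) * ∏ j, combPoly 1 4 2 0 (x j)) (Measure.pi ν) := by exact j1.sub iC'
  have j3 : Integrable (fun x : Fin m → ℕ => (1/6 : ℝ) * ∏ j, combPoly 1 0 0 0 (x j)
      - (2/3 : ℝ) * ∏ j, combPoly 1 3 0 0 (x j)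
      - (1/2 : ℝ) * ∏ j, combPoly 1 4 2 0 (x j)
      + 2 * ∏ j, combPoly 1 5 4 0 (x j)) (Measure.pi ν) := by exact j2.add iD'
  rw [integral_sub j3 iE, integral_add j2 iD',
    integral_sub j1 iC', integral_sub iA' iB',
    integral_const_mul, integral_const_mul, integral_const_mul, integral_const_mul,
    my_integral_pi, my_integral_pi, my_integral_pi, my_integral_pi, my_integral_pi]
  simp only [hν, comb_integral]
  have hA : ∏ j, ((1:ℝ) * (μ j : ℝ) ^ 4 + 0 * (μ j : ℝ) ^ 3 + 0 * (μ j : ℝ) ^ 2 + 0 * (μ j : ℝ))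
      = (∏ j, (μ j : ℝ)) ^ 4 := by
    rw [← Finset.prod_pow]; exact Finset.prod_congr rfl fun j _ => by ring
  have hB : ∏ j, ((1:ℝ) * (μ j : ℝ) ^ 4 + 3 * (μ j : ℝ) ^ 3 + 0 * (μ j : ℝ) ^ 2 + 0 * (μ j : ℝ))
      = (∏ j, (μ j : ℝ)) ^ 3 * ∏ j, (3 + (μ j : ℝ)) := by
    rw [← Finset.prod_pow, ← Finset.prod_mul_distrib]
    exact Finset.prod_congr rfl fun j _ => by ring
  have hC : ∏ j, ((1:ℝ) * (μ j : ℝ) ^ 4 + 4 * (μ j : ℝ) ^ 3 + 2 * (μ j : ℝ) ^ 2 + 0 * (μ j : ℝ))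
      = (∏ j, (μ j : ℝ)) ^ 2 * ∏ j, (2 + 4 * (μ j : ℝ) + (μ j : ℝ) ^ 2) := by
    rw [← Finset.prod_pow, ← Finset.prod_mul_distrib]
    exact Finset.prod_congr rfl fun j _ => by ring
  have hD : ∏ j, ((1:ℝ) * (μ j : ℝ) ^ 4 + 5 * (μ j : ℝ) ^ 3 + 4 * (μ j : ℝ) ^ 2 + 0 * (μ j : ℝ))
      = (∏ j, (μ j : ℝ)) ^ 2 * ∏ j, (4 + 5 * (μ j : ℝ) + (μ j : ℝ) ^ 2) := by
    rw [← Finset.prod_pow, ← Finset.prod_mul_distrib]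
    exact Finset.prod_congr rfl fun j _ => by ring
  have hE : ∏ j, ((1:ℝ) * (μ j : ℝ) ^ 4 + 6 * (μ j : ℝ) ^ 3 + 7 * (μ j : ℝ) ^ 2 + 1 * (μ j : ℝ))
      = (∏ j, (μ j : ℝ)) * ∏ j, (1 + 7 * (μ j : ℝ) + 6 * (μ j : ℝ) ^ 2 + (μ j : ℝ) ^ 3) := by
    rw [← Finset.prod_mul_distrib]
    exact Finset.prod_congr rfl fun j _ => by ring
  rw [hA, hB, hC, hD, hE]
  ring
end

section
/- Fix integers n ≥ 1, m ≥ 2 and nonnegative integers y_{ij} (1 ≤ i ≤ n, 1 ≤ j ≤ m). Set ȳ_j = n^{-1}∑_{i=1}^n y_{ij} and assume ȳ_j > 0 for all j, and let y_i = min_{1≤j≤m} y_{ij}. For 0 ≤ λ < min_j ȳ_j define ξ(λ) = λ / ∏_{j=1}^m(ȳ_j − λ), and for a vector v = (v_1,…,v_m) of nonnegative integers define S_i(λ; v) = ∑_{u=0}^{min_j v_j} ξ(λ)^u / ( u! ∏_{j=1}^m (v_j − u)! ). Define l(λ) = n( (m−1)λ − ∑_{j=1}^m ȳ_j ) + n∑_{j=1}^m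 ȳ_j log(ȳ_j − λ) + ∑_{i=1}^n log S_i(λ; y_{i·}), where y_{i·} = (y_{i1},…,y_{im}). Then for every λ ∈ (0, min_j ȳ_j), l is differentiable at λ with l′(λ) = (1 + λ∑_{j=1}^m (ȳ_j − λ)^{-1}) · ( −n + (∏_{j=1}^m(ȳ_j − λ))^{-1} ∑_{i=1}^n [S_i(λ; y_{i·} − 1)/S_i(λ; y_{i·})]·1{y_i > 0} ), where y_{i·} − 1 = (y_{i1}−1,…,y_{im}−1) and 1{y_i > 0} is the indicator that min_j y_{ij} > 0. -/
open Finset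

lemma nat_iInf_sub_one {m : ℕ} [Nonempty (Fin m)] (v : Fin m → ℕ) :
    (⨅ j, (v j - 1)) = (⨅ j, v j) - 1 := by
  have h1 : ∀ j, (⨅ j, v j) ≤ v j := fun j => ciInf_le (OrderBot.bddBelow _) j
  obtain ⟨j0, hj0⟩ : ∃ j0, v j0 = ⨅ j, v j := by
    have h : (⨅ j, v j) ∈ Set.range v := by
      rw [iInf]
      exact Nat.sInf_mem (Set.range_nonempty v)
    obtain ⟨j0, h⟩ := h
    exact ⟨j0, h⟩
  apply le_antisymm
  · exact le_trans (ciInf_le (OrderBot.bddBelow _) j0) (by omega)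
  · exact le_ciInf fun j => by have := h1 j; omega

/-- Derivative of the profile log-likelihood `l(λ)` of the dependent Poisson model.
Here `ybar j` is the `j`-th sample mean, `ξ` is as in the paper, `S lam v` is the
truncated sum `S_i(λ; v)` (the sum running up to `min_j v_j`), and `l` is the
log-likelihood.  For every `λ ∈ (0, min_j ȳ_j)`, `l` is differentiable at `λ` with
the stated derivative. -/
theorem loglik_hasDerivAt (n m : ℕ) (hn : 1 ≤ n) (hm : 2 ≤ m)
    (y : Fin n → Fin m → ℕ)
    (ybar : Fin m → ℝ) (hybar : ybar = fun j => (n : ℝ)⁻¹ * ∑ i, (y i j : ℝ))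
    (hpos : ∀ j, 0 < ybar j)
    (ξ : ℝ → ℝ) (hξ : ∀ lam, ξ lam = lam / ∏ j, (ybar j - lam))
    (S : ℝ → (Fin m → ℕ) → ℝ)
    (hS : ∀ lam (v : Fin m → ℕ), S lam v = ∑ u ∈ Finset.range ((⨅ j, v j) + 1),
        ξ lam ^ u / ((u.factorial : ℝ) * ∏ j, ((v j - u).factorial : ℝ)))
    (l : ℝ → ℝ)
    (hl : ∀ lam, l lam = (n : ℝ) * (((m : ℝ) - 1) * lam - ∑ j, ybar j)
        + (n : ℝ) * ∑ j, ybar j * Real.log (ybar j - lam)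
        + ∑ i, Real.log (S lam (y i))) :
    ∀ lam ∈ Set.Ioo (0 : ℝ) (⨅ j, ybar j),
      HasDerivAt l
        ((1 + lam * ∑ j, (ybar j - lam)⁻¹) *
          (-(n : ℝ) + (∏ j, (ybar j - lam))⁻¹ *
            ∑ i, if 0 < ⨅ j, y i j then S lam (fun j => y i j - 1) / S lam (y i) else 0))
        lam := by
  intro lam hlam
  obtain ⟨hl0, hlt⟩ := hlam
  haveI hne : Nonempty (Fin m) := ⟨⟨0, by omega⟩⟩
  have hsub : ∀ j, 0 < ybar j - lam := fun j =>
    sub_pos.2 (hlt.trans_le (ciInf_le (Set.Finite.bddBelow (Set.finite_range _)) j))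
  have hPpos : 0 < ∏ j, (ybar j - lam) := Finset.prod_pos fun j _ => hsub j
  have hPne : (∏ j, (ybar j - lam)) ≠ 0 := hPpos.ne'
  have hfac : ∀ k : ℕ, (0:ℝ) < (k.factorial : ℝ) := fun k => by
    exact_mod_cast k.factorial_pos
  -- derivative of the product P
  have hP : HasDerivAt (fun x => ∏ j, (ybar j - x))
      (-((∏ j, (ybar j - lam)) * ∑ j, (ybar j - lam)⁻¹)) lam := by
    have h := HasDerivAt.fun_finsetProd (u := (Finset.univ : Finset (Fin m)))
      (f := fun j x => ybar j - x) (f' := fun _ => (-1 : ℝ)) (x := lam)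
      (fun j _ => (hasDerivAt_id lam).const_sub (ybar j))
    refine HasDerivAt.congr_deriv (h) (Eq.symm ?_)
    simp only [smul_eq_mul, mul_neg_one]
    rw [Finset.mul_sum, ← Finset.sum_neg_distrib]
    refine Finset.sum_congr rfl fun j _ => ?_
    rw [neg_inj]
    have hj : (ybar j - lam) * ∏ k ∈ univ.erase j, (ybar k - lam) = ∏ k, (ybar k - lam) :=
      Finset.mul_prod_erase Finset.univ (fun k => ybar k - lam) (Finset.mem_univ j)
    rw [← hj]
    field_simp [(hsub j).ne']
  -- derivative of ξ
  have hxid : HasDerivAt ξ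
      ((1 + lam * ∑ j, (ybar j - lam)⁻¹) / ∏ j, (ybar j - lam)) lam := by
    have hfun : ξ = fun x => x / ∏ j, (ybar j - x) := funext hξ
    rw [hfun]
    have h := (hasDerivAt_id lam).div hP hPne
    refine HasDerivAt.congr_deriv (h) (Eq.symm ?_)
    simp only [id]
    field_simp
    ring
  have hxipos : 0 < ξ lam := by
    rw [hξ]; exact div_pos hl0 hPpos
  have hSpos : ∀ v : Fin m → ℕ, 0 < S lam v := by
    intro v
    rw [hS]
    apply Finset.sum_pos'
    · intro u _
      exact div_nonneg (pow_nonneg hxipos.le u)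
        (mul_pos (hfac u) (Finset.prod_pos fun j _ => hfac _)).le
    · refine ⟨0, Finset.mem_range.2 (Nat.succ_pos _), ?_⟩
      simp only [pow_zero]
      exact div_pos one_pos (mul_pos (hfac 0) (Finset.prod_pos fun j _ => hfac _))
  -- derivative of S
  have hSd : ∀ v : Fin m → ℕ, HasDerivAt (fun x => S x v)
      (((1 + lam * ∑ j, (ybar j - lam)⁻¹) / ∏ j, (ybar j - lam)) *
        (if 0 < ⨅ j, v j then S lam (fun j => v j - 1) else 0)) lam := by
    intro v
    have hfun : (fun x => S x v) = fun x => ∑ u ∈ Finset.range ((⨅ j, v j) + 1),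
        ξ x ^ u / ((u.factorial : ℝ) * ∏ j, ((v j - u).factorial : ℝ)) :=
      funext fun x => hS x v
    rw [hfun]
    have hsum : HasDerivAt (fun x => ∑ u ∈ Finset.range ((⨅ j, v j) + 1),
        ξ x ^ u / ((u.factorial : ℝ) * ∏ j, ((v j - u).factorial : ℝ)))
        (∑ u ∈ Finset.range ((⨅ j, v j) + 1),
          ((u : ℝ) * ξ lam ^ (u - 1) *
            ((1 + lam * ∑ j, (ybar j - lam)⁻¹) / ∏ j, (ybar j - lam)))
            / ((u.factorial : ℝ) * ∏ j, ((v j - u).factorial : ℝ))) lam :=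
      HasDerivAt.fun_sum fun u _ => (hxid.pow u).div_const _
    convert hsum using 1
    rcases Nat.eq_zero_or_pos (⨅ j, v j) with hM | hM
    · rw [hM]
      simp
    · rw [if_pos hM]
      have hiInf : (⨅ j, ((fun j => v j - 1) j)) = (⨅ j, v j) - 1 := nat_iInf_sub_one v
      rw [hS lam (fun j => v j - 1)]
      simp only [hiInf]
      have hM1 : (⨅ j, v j) - 1 + 1 = (⨅ j, v j) := Nat.succ_pred_eq_of_pos hM
      conv_rhs => rw [← hM1, Finset.sum_range_succ']
      simp only [Nat.cast_zero, zero_mul, zero_div, add_zero]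
      rw [Finset.mul_sum]
      refine Finset.sum_congr rfl fun w _ => ?_
      have hD : (∏ j, ((v j - (w + 1)).factorial : ℝ))
          = ∏ j, ((v j - 1 - w).factorial : ℝ) :=
        Finset.prod_congr rfl fun j _ => by congr 2; omega
      rw [hD, Nat.add_sub_cancel, Nat.factorial_succ, Nat.cast_mul, Nat.cast_add,
        Nat.cast_one]
      have h1 : ((w : ℝ) + 1) ≠ 0 := by positivity
      have h2 : (w.factorial : ℝ) ≠ 0 := (hfac w).ne'
      have h3 : (∏ j, ((v j - 1 - w).factorial : ℝ)) ≠ 0 :=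
        (Finset.prod_pos fun j _ => hfac _).ne'
      field_simp
  -- derivative of the three parts of l
  have hd1 : HasDerivAt (fun x => (n : ℝ) * (((m : ℝ) - 1) * x - ∑ j, ybar j))
      ((n : ℝ) * ((m : ℝ) - 1)) lam := by
    have h := (((hasDerivAt_id lam).const_mul ((m : ℝ) - 1)).sub_const
      (∑ j, ybar j)).const_mul (n : ℝ)
    refine HasDerivAt.congr_deriv (h) (Eq.symm ?_)
    ring
  have hd2 : HasDerivAt (fun x => (n : ℝ) * ∑ j, ybar j * Real.log (ybar j - x))
      (-(n : ℝ) * ((m : ℝ) + lam * ∑ j, (ybar j - lam)⁻¹)) lam := by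
    have hterm : ∀ j : Fin m, HasDerivAt (fun x => ybar j * Real.log (ybar j - x))
        (-(1 + lam * (ybar j - lam)⁻¹)) lam := by
      intro j
      have h := (((hasDerivAt_id lam).const_sub (ybar j)).log (hsub j).ne').const_mul
        (ybar j)
      refine HasDerivAt.congr_deriv (h) (Eq.symm ?_)
      have hj : ybar j - lam ≠ 0 := (hsub j).ne'
      simp only [id]
      field_simp
      ring
    have h := (HasDerivAt.fun_sum (u := Finset.univ) fun j _ => hterm j).const_mul (n : ℝ)
    refine HasDerivAt.congr_deriv (h) (Eq.symm ?_)
    rw [Finset.sum_neg_distrib, Finset.sum_add_distrib, Finset.sum_const,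
      Finset.card_univ, ← Finset.mul_sum]
    simp only [Fintype.card_fin, nsmul_eq_mul, mul_one]
    ring
  have hd3 : HasDerivAt (fun x => ∑ i, Real.log (S x (y i)))
      (((1 + lam * ∑ j, (ybar j - lam)⁻¹) / ∏ j, (ybar j - lam)) *
        ∑ i, if 0 < ⨅ j, y i j then S lam (fun j => y i j - 1) / S lam (y i) else 0)
      lam := by
    have h := HasDerivAt.fun_sum (u := (Finset.univ : Finset (Fin n)))
      fun i _ => ((hSd (y i)).log (hSpos (y i)).ne')
    refine HasDerivAt.congr_deriv (h) (Eq.symm ?_)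
    rw [Finset.mul_sum]
    refine Finset.sum_congr rfl fun i _ => ?_
    split_ifs with hc
    · ring
    · simp
  have hlfun : l = fun x => (n : ℝ) * (((m : ℝ) - 1) * x - ∑ j, ybar j)
      + (n : ℝ) * ∑ j, ybar j * Real.log (ybar j - x)
      + ∑ i, Real.log (S x (y i)) := funext hl
  rw [hlfun]
  refine HasDerivAt.congr_deriv ((hd1.add hd2).add hd3) (Eq.symm ?_)
  rw [div_eq_mul_inv]
  ring
end
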